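/- Let C > 0 and 0 < T' < 1 satisfy C·T' ≤ 1/2. Let φ₁, φ₂, φ₁₂ : [0,T'] → ℝ be such that φ₁ and φ₁₂ are Lipschitz continuous with Lipschitz constant C, φ₂ is absolutely continuous with |φ₂'(t)| ≤ |φ₁₂(t)| for a.e. t, and max(|φ₁(0)|, |φ₂(0)|, |φ₁₂(0)|) = 1. If φ₁ has a zero in [0,T'] and φ₁₂ has a zero in [0,T'], then φ₂(t) ≠ 0 for every t ∈ [0,T']. -/

import Mathlib

open MeasureTheory Set

/-- If `C·T' ≤ 1/2` with `0 < T' < 1`, `φ₁` and `φ₁₂` are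
`C`-Lipschitz on `[0,T']`, `φ₂` is absolutely continuous with `|φ₂'| ≤ |φ₁₂|` a.e.,
`max(|φ₁(0)|, |φ₂(0)|, |φ₁₂(0)|) = 1`, and both `φ₁` and `φ₁₂` vanish somewhere on
`[0,T']`, then `φ₂` never vanishes on `[0,T']`. -/
theorem statement_9 (C T' : ℝ) (hC : 0 < C) (hT'0 : 0 < T') (hT'1 : T' < 1)
    (hCT : C * T' ≤ 1 / 2) (φ₁ φ₂ φ₁₂ : ℝ → ℝ)
    (h₁ : LipschitzOnWith (Real.toNNReal C) φ₁ (Icc 0 T'))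
    (h₁₂ : LipschitzOnWith (Real.toNNReal C) φ₁₂ (Icc 0 T'))
    (g : ℝ → ℝ) (hg_int : IntegrableOn g (Icc 0 T'))
    (hφ₂ : ∀ t ∈ Icc (0:ℝ) T', φ₂ t = φ₂ 0 + ∫ s in Icc (0:ℝ) t, g s)
    (hg_bd : ∀ᵐ t ∂volume, t ∈ Icc (0:ℝ) T' → |g t| ≤ |φ₁₂ t|)
    (hmax : max |φ₁ 0| (max |φ₂ 0| |φ₁₂ 0|) = 1)
    (hz₁ : ∃ t ∈ Icc (0:ℝ) T', φ₁ t = 0)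
    (hz₁₂ : ∃ t ∈ Icc (0:ℝ) T', φ₁₂ t = 0) :
    ∀ t ∈ Icc (0:ℝ) T', φ₂ t ≠ 0 := by
  obtain ⟨t₁, ht₁, hφ₁t₁⟩ := hz₁
  obtain ⟨t₂, ht₂, hφ₁₂t₂⟩ := hz₁₂
  have hCnn : (Real.toNNReal C : ℝ) = C := Real.coe_toNNReal C hC.le
  -- Lipschitz bound lemma
  have key : ∀ (φ : ℝ → ℝ), LipschitzOnWith (Real.toNNReal C) φ (Icc 0 T') →
      ∀ a ∈ Icc (0:ℝ) T', ∀ b ∈ Icc (0:ℝ) T', φ b = 0 → |φ a| ≤ 1/2 := by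
    intro φ hlip a ha b hb hzero
    have := hlip.dist_le_mul a ha b hb
    rw [Real.dist_eq, Real.dist_eq, hzero, sub_zero, hCnn] at this
    have hab : |a - b| ≤ T' := by
      rw [abs_sub_le_iff]
      constructor <;> nlinarith [ha.1, ha.2, hb.1, hb.2]
    calc |φ a| ≤ C * |a - b| := this
      _ ≤ C * T' := by nlinarith
      _ ≤ 1/2 := hCT
  have h0 : (0:ℝ) ∈ Icc (0:ℝ) T' := ⟨le_refl _, hT'0.le⟩
  have hφ₁0 : |φ₁ 0| ≤ 1/2 := key φ₁ h₁ 0 h0 t₁ ht₁ hφ₁t₁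
  have hφ₁₂0 : |φ₁₂ 0| ≤ 1/2 := key φ₁₂ h₁₂ 0 h0 t₂ ht₂ hφ₁₂t₂
  have hφ₂0 : |φ₂ 0| = 1 := by
    rcases max_cases |φ₁ 0| (max |φ₂ 0| |φ₁₂ 0|) with ⟨h, _⟩ | ⟨h, _⟩
    · linarith [hmax ▸ h]
    · rw [h] at hmax
      rcases max_cases |φ₂ 0| |φ₁₂ 0| with ⟨h2, _⟩ | ⟨h2, _⟩
      · rw [h2] at hmax; exact hmax
      · rw [h2] at hmax; linarith
  -- bound on |φ₁₂ t| everywhere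
  have hφ₁₂bd : ∀ s ∈ Icc (0:ℝ) T', |φ₁₂ s| ≤ 1/2 := fun s hs =>
    key φ₁₂ h₁₂ s hs t₂ ht₂ hφ₁₂t₂
  intro t ht
  have hsub : Icc (0:ℝ) t ⊆ Icc (0:ℝ) T' := Icc_subset_Icc le_rfl ht.2
  have hgint_t : IntegrableOn g (Icc 0 t) := hg_int.mono_set hsub
  -- bound the integral
  have hbd : |∫ s in Icc (0:ℝ) t, g s| ≤ t * (1/2) := by
    have h1 : |∫ s in Icc (0:ℝ) t, g s| ≤ ∫ s in Icc (0:ℝ) t, |g s| := by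
      simpa using norm_integral_le_integral_norm (μ := volume.restrict (Icc 0 t)) g
    have h2 : ∫ s in Icc (0:ℝ) t, |g s| ≤ ∫ _s in Icc (0:ℝ) t, (1/2:ℝ) := by
      apply integral_mono_ae hgint_t.abs (integrableOn_const (by simp))
      have hmem := ae_restrict_mem (μ := volume) (measurableSet_Icc (a := (0:ℝ)) (b := t))
      have hbd' := ae_restrict_of_ae (μ := volume) (s := Icc (0:ℝ) t) hg_bd
      filter_upwards [hmem, hbd'] with s hs hb
      exact le_trans (hb (hsub hs)) (hφ₁₂bd s (hsub hs))
    have h3 : ∫ _s in Icc (0:ℝ) t, (1/2:ℝ) = t * (1/2) := by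
      simp [Real.volume_Icc, ht.1]
    linarith
  have hφ₂t := hφ₂ t ht
  have : |φ₂ t| ≥ 1 - t * (1/2) := by
    rw [hφ₂t]
    have := abs_add_le (φ₂ 0) (∫ s in Icc (0:ℝ) t, g s)
    have h4 : |φ₂ 0| ≤ |φ₂ 0 + ∫ s in Icc (0:ℝ) t, g s| + |∫ s in Icc (0:ℝ) t, g s| := by
      calc |φ₂ 0| = |(φ₂ 0 + ∫ s in Icc (0:ℝ) t, g s) - ∫ s in Icc (0:ℝ) t, g s| := by ring_nf
        _ ≤ _ := abs_sub _ _
    linarith [hφ₂0 ▸ h4]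
  have ht2 : t * (1/2) < 1 := by nlinarith [ht.2]
  intro hzero
  rw [hzero] at this
  simp at this
  linarith
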